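/- Let A ⊆ ℝⁿ be a nonempty closed proper subset of ℝⁿ with nonempty interior, and let r > 0. If A is r-spherically supported, then exactly one connected component of A has nonempty interior. -/

import Mathlib

open scoped RealInnerProductSpace

variable {E : Type*} [NormedAddCommGroup E] [InnerProductSpace ℝ E]

/-- The proximal normal cone to `A` at `a`. -/
def proxNormalCone (A : Set E) (a : E) : Set E :=
  {ζ : E | ∃ σ : ℝ, 0 ≤ σ ∧ ∀ x ∈ A, ⟪ζ, x - a⟫ ≤ σ * ‖x - a‖ ^ 2}

/-- `A` is `r`-strongly convex: it is the intersection of a nonempty family of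
closed balls of radius `r`. -/
def IsStronglyConvex (r : ℝ) (A : Set E) : Prop :=
  ∃ C : Set E, C.Nonempty ∧ A = ⋂ c ∈ C, Metric.closedBall c r

/-- `A` is `r`-spherically supported. -/
def IsSphericallySupported (r : ℝ) (A : Set E) : Prop :=
  ∀ a ∈ frontier A, ∃ ζ ∈ proxNormalCone A a, ζ ≠ 0 ∧
    ∀ x ∈ A, ⟪‖ζ‖⁻¹ • ζ, x - a⟫ ≤ -(1 / (2 * r)) * ‖x - a‖ ^ 2

/-- `A` is epi-Lipschitz (wedged). -/
def IsEpiLipschitz (A : Set E) : Prop :=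
  ∀ a ∈ frontier A, ∃ v : E, ∃ ε : ℝ, 0 < ε ∧
    ∀ a' ∈ A, ‖a' - a‖ < ε → ∀ t : ℝ, 0 ≤ t → t < ε →
      ∀ w : E, ‖w - v‖ < ε → a' + t • w ∈ A

/-- The set of farthest points of `A` from `x`. -/
def farPoints (A : Set E) (x : E) : Set E :=
  {a : E | a ∈ A ∧ ∀ b ∈ A, ‖x - b‖ ≤ ‖x - a‖}

/-- `E_r(A)`: the set of points whose farthest distance to `A` exceeds `r`. -/
def farExceeds (r : ℝ) (A : Set E) : Set E := {x : E | ∃ a ∈ A, r < ‖x - a‖}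

/-- `A` is `r`-negatively `S`-convex. -/
def IsNegSConvex (r : ℝ) (S A : Set E) : Prop :=
  ¬ ∃ a ∈ frontier A, ∃ a' ∈ frontier A, a ≠ a' ∧
      ∃ ζ ∈ proxNormalCone A a, ‖ζ‖ = 1 ∧
        ∃ ζ' ∈ proxNormalCone A a', ‖ζ'‖ = 1 ∧
          ∃ t : ℝ, r < t ∧ ∃ t' : ℝ, r < t' ∧
            a - t • ζ = a' - t' • ζ' ∧ a - t • ζ ∈ S

/-- `A` satisfies the exterior `r`-sphere condition. -/
def SatisfiesExtSphere (r : ℝ) (A : Set E) : Prop :=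
  ∀ a ∈ frontier A, ∃ ζ ∈ proxNormalCone A a, ζ ≠ 0 ∧
    ∀ x ∈ A, ⟪‖ζ‖⁻¹ • ζ, x - a⟫ ≤ (1 / (2 * r)) * ‖x - a‖ ^ 2

/-- `A` is `r`-prox-regular. -/
def IsProxRegular (r : ℝ) (A : Set E) : Prop :=
  ∀ a ∈ frontier A, ∀ ζ ∈ proxNormalCone A a, ζ ≠ 0 →
    ∀ x ∈ A, ⟪‖ζ‖⁻¹ • ζ, x - a⟫ ≤ (1 / (2 * r)) * ‖x - a‖ ^ 2

section Aux

variable {E : Type*} [NormedAddCommGroup E] [InnerProductSpace ℝ E]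

lemma isClosed_connectedComponentIn' {F : Set E} (hF : IsClosed F) (x : E) :
    IsClosed (connectedComponentIn F x) := by
  by_cases hx : x ∈ F
  · have h1 : closure (connectedComponentIn F x) ⊆ connectedComponentIn F x := by
      apply IsPreconnected.subset_connectedComponentIn
        isPreconnected_connectedComponentIn.closure
        (subset_closure (mem_connectedComponentIn hx))
      calc closure (connectedComponentIn F x) ⊆ closure F :=
            closure_mono (connectedComponentIn_subset F x)
        _ = F := hF.closure_eq
    exact isClosed_of_closure_subset h1
  · rw [connectedComponentIn_eq_empty hx]; exact isClosed_empty

lemma key_normal {A : Set E} {r : ℝ} (hr : 0 < r) (hss : IsSphericallySupported r A)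
    {a : E} (ha : a ∈ frontier A) :
    ∃ ν : E, ‖ν‖ = 1 ∧ ∀ x : E, ∀ ε : ℝ, 0 < ε → Metric.closedBall x ε ⊆ A →
      ε ≤ ⟪ν, a - x⟫ := by
  obtain ⟨ζ, -, hζne, hζ⟩ := hss a ha
  refine ⟨‖ζ‖⁻¹ • ζ, ?_, ?_⟩
  · rw [norm_smul, norm_inv, norm_norm, inv_mul_cancel₀ (norm_ne_zero_iff.mpr hζne)]
  · intro x ε hε hx
    set ν := ‖ζ‖⁻¹ • ζ with hν
    have hνnorm : ‖ν‖ = 1 := by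
      rw [hν, norm_smul, norm_inv, norm_norm, inv_mul_cancel₀ (norm_ne_zero_iff.mpr hζne)]
    have hmem : x + ε • ν ∈ A := by
      apply hx
      simp only [Metric.mem_closedBall, dist_eq_norm, add_sub_cancel_left, norm_smul,
        Real.norm_eq_abs, abs_of_pos hε, hνnorm, mul_one, le_refl]
    have h1 := hζ (x + ε • ν) hmem
    have h2 : -(1 / (2 * r)) * ‖x + ε • ν - a‖ ^ 2 ≤ 0 := by
      apply mul_nonpos_of_nonpos_of_nonneg
      · have : 0 < 1 / (2 * r) := by positivity
        linarith
      · positivity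
    have h3 : ⟪ν, x + ε • ν - a⟫ ≤ 0 := le_trans h1 h2
    have h4 : x + ε • ν - a = (x - a) + ε • ν := by abel
    rw [h4, inner_add_right, real_inner_smul_right, real_inner_self_eq_norm_sq, hνnorm] at h3
    have h5 : ⟪ν, a - x⟫ = -⟪ν, x - a⟫ := by
      rw [← inner_neg_right]; congr 1; abel
    rw [h5]; nlinarith

lemma same_component {A : Set E} {r : ℝ} (hr : 0 < r) (hcl : IsClosed A)
    (hss : IsSphericallySupported r A) {x y : E}
    (hx : x ∈ interior A) (hy : y ∈ interior A) :
    y ∈ connectedComponentIn A x := by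
  obtain ⟨ε₁, hε₁, hb₁⟩ := Metric.isOpen_iff.mp isOpen_interior x hx
  obtain ⟨ε₂, hε₂, hb₂⟩ := Metric.isOpen_iff.mp isOpen_interior y hy
  set ε : ℝ := min ε₁ ε₂ / 2 with hεdef
  have hε : 0 < ε := by positivity
  have hbx : Metric.closedBall x ε ⊆ A := by
    refine Set.Subset.trans ?_ (Set.Subset.trans hb₁ interior_subset)
    intro z hz
    have : ε < ε₁ := by
      have := min_le_left ε₁ ε₂; rw [hεdef]; linarith
    exact lt_of_le_of_lt (Metric.mem_closedBall.mp hz) this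
  have hby : Metric.closedBall y ε ⊆ A := by
    refine Set.Subset.trans ?_ (Set.Subset.trans hb₂ interior_subset)
    intro z hz
    have : ε < ε₂ := by
      have := min_le_right ε₁ ε₂; rw [hεdef]; linarith
    exact lt_of_le_of_lt (Metric.mem_closedBall.mp hz) this
  have hxA : x ∈ A := interior_subset hx
  set C : Set E := connectedComponentIn A x with hC
  set p : ℝ → E := fun t => x + t • (y - x) with hp
  set S : Set ℝ := {t | t ∈ Set.Icc (0:ℝ) 1 ∧ p t ∈ C} with hS
  have hS0 : (0:ℝ) ∈ S := by
    constructor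
    · exact ⟨le_refl 0, zero_le_one⟩
    · simp only [hp, zero_smul, add_zero]
      exact mem_connectedComponentIn hxA
  have hSne : S.Nonempty := ⟨0, hS0⟩
  have hSbdd : BddAbove S := ⟨1, fun t ht => ht.1.2⟩
  have hCclosed : IsClosed C := isClosed_connectedComponentIn' hcl x
  have hSclosed : IsClosed S := by
    have hcont : Continuous p := by
      apply Continuous.add continuous_const
      exact (continuous_id.smul continuous_const)
    exact (isClosed_Icc.inter (hCclosed.preimage hcont) : IsClosed (Set.Icc (0:ℝ) 1 ∩ p ⁻¹' C))
  set t₀ : ℝ := sSup S with ht₀def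
  have ht₀S : t₀ ∈ S := hSclosed.csSup_mem hSne hSbdd
  have ht₀0 : 0 ≤ t₀ := ht₀S.1.1
  have ht₀1 : t₀ ≤ 1 := ht₀S.1.2
  have hzC : p t₀ ∈ C := ht₀S.2
  have hzA : p t₀ ∈ A := connectedComponentIn_subset A x hzC
  by_cases hcase : p t₀ ∈ interior A
  · -- interior case: either t₀ = 1, or we can extend, contradiction
    rcases eq_or_lt_of_le ht₀1 with h1 | h1
    · have : p t₀ = y := by rw [hp]; simp only; rw [h1, one_smul]; abel
      rwa [this] at hzC
    · exfalso
      obtain ⟨δ, hδ, hbδ⟩ := Metric.isOpen_iff.mp isOpen_interior (p t₀) hcase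
      have hballC : Metric.ball (p t₀) δ ⊆ C := by
        have h1' : Metric.ball (p t₀) δ ⊆ connectedComponentIn A (p t₀) :=
          (convex_ball (p t₀) δ).isPreconnected.subset_connectedComponentIn
            (Metric.mem_ball_self hδ)
            (Set.Subset.trans hbδ interior_subset)
        rw [hC, connectedComponentIn_eq hzC]
        exact h1'
      set t₁ : ℝ := min 1 (t₀ + δ / (‖y - x‖ + 1)) with ht₁def
      have ht₁S : t₁ ∈ S := by
        constructor
        · constructor
          · have : 0 ≤ t₀ + δ / (‖y - x‖ + 1) := by positivity
            rw [ht₁def]; exact le_min zero_le_one this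
          · exact min_le_left _ _
        · apply hballC
          rw [Metric.mem_ball, dist_eq_norm]
          have hpt : p t₁ - p t₀ = (t₁ - t₀) • (y - x) := by
            rw [hp]; simp only; rw [sub_smul]; abel
          rw [hpt, norm_smul, Real.norm_eq_abs]
          have ht₁ge : t₀ ≤ t₁ := by
            rw [ht₁def]
            apply le_min (le_of_lt h1)
            have : 0 < δ / (‖y - x‖ + 1) := by positivity
            linarith
          have ht₁le : t₁ - t₀ ≤ δ / (‖y - x‖ + 1) := by
            rw [ht₁def]
            have := min_le_right 1 (t₀ + δ / (‖y - x‖ + 1))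
            linarith
          rw [abs_of_nonneg (by linarith : (0:ℝ) ≤ t₁ - t₀)]
          calc (t₁ - t₀) * ‖y - x‖ ≤ (δ / (‖y - x‖ + 1)) * ‖y - x‖ := by
                apply mul_le_mul_of_nonneg_right ht₁le (norm_nonneg _)
            _ < δ := by
                rw [div_mul_eq_mul_div, div_lt_iff₀ (by positivity)]
                nlinarith [norm_nonneg (y - x)]
      have ht₁gt : t₀ < t₁ := by
        rw [ht₁def]
        apply lt_min h1
        have : 0 < δ / (‖y - x‖ + 1) := by positivity
        linarith
      exact absurd (le_csSup hSbdd ht₁S) (not_le.mpr ht₁gt)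
  · -- frontier case: contradiction
    exfalso
    have hfr : p t₀ ∈ frontier A := by
      rw [hcl.frontier_eq]; exact ⟨hzA, hcase⟩
    obtain ⟨ν, -, hν⟩ := key_normal hr hss hfr
    have h1 := hν x ε hε hbx
    have h2 := hν y ε hε hby
    have e1 : p t₀ - x = t₀ • (y - x) := by rw [hp]; simp
    have e2 : p t₀ - y = (t₀ - 1) • (y - x) := by
      rw [hp, sub_smul, one_smul]; show x + t₀ • (y - x) - y = t₀ • (y - x) - (y - x); abel
    rw [e1, real_inner_smul_right] at h1
    rw [e2, real_inner_smul_right] at h2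
    nlinarith [h1, h2, hε, ht₀0, ht₀1]

end Aux

theorem statement_11 {n : ℕ} (A : Set (EuclideanSpace ℝ (Fin n)))
    (hne : A.Nonempty) (hcl : IsClosed A) (hproper : A ≠ Set.univ)
    (hint : (interior A).Nonempty) (r : ℝ) (hr : 0 < r)
    (hss : IsSphericallySupported r A) :
    ∃! C : Set (EuclideanSpace ℝ (Fin n)),
      (∃ a ∈ A, C = connectedComponentIn A a) ∧ (interior C).Nonempty := by
  obtain ⟨x₀, hx₀⟩ := hint
  have hx₀A : x₀ ∈ A := interior_subset hx₀
  refine ⟨connectedComponentIn A x₀, ⟨⟨x₀, hx₀A, rfl⟩, ?_⟩, ?_⟩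
  · -- interior of the component of x₀ is nonempty
    obtain ⟨δ, hδ, hbδ⟩ := Metric.isOpen_iff.mp isOpen_interior x₀ hx₀
    have hball : Metric.ball x₀ δ ⊆ connectedComponentIn A x₀ :=
      (convex_ball x₀ δ).isPreconnected.subset_connectedComponentIn
        (Metric.mem_ball_self hδ) (Set.Subset.trans hbδ interior_subset)
    exact ⟨x₀, interior_maximal hball Metric.isOpen_ball (Metric.mem_ball_self hδ)⟩
  · -- uniqueness
    rintro C ⟨⟨a, haA, rfl⟩, ⟨y, hy⟩⟩
    have hyA : y ∈ interior A :=
      interior_mono (connectedComponentIn_subset A a) hy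
    have hyC : y ∈ connectedComponentIn A a := interior_subset hy
    have h1 : connectedComponentIn A a = connectedComponentIn A y :=
      connectedComponentIn_eq hyC
    have h2 : y ∈ connectedComponentIn A x₀ := same_component hr hcl hss hx₀ hyA
    have h3 : connectedComponentIn A x₀ = connectedComponentIn A y :=
      connectedComponentIn_eq h2
    rw [h1, h3]
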